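/- arXiv:2508.02078 — 3 statements merged into one kernel-verified Lean document; each statement's English description precedes it below -/
import Mathlib

section
/- An Arnoldi aggregation of size j is (j−1)-exact: the approximated transient distributions satisfy p̃_k = p_k for all 0 ≤ k ≤ j−1, where p_k^T = p_0^T P^k are the true transient distributions. -/
open Matrix Finset

/-- Euclidean norm of a row vector. -/
noncomputable def norm2 {n : ℕ} (v : Fin n → ℝ) : ℝ := Real.sqrt (v ⬝ᵥ v)

/-- One Gram–Schmidt projection-subtraction step. -/
noncomputable def gsStep {n : ℕ} (r q : Fin n → ℝ) : Fin n → ℝ := r - (r ⬝ᵥ q) • q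

/-- List `[q_0, …, q_j]` of Arnoldi vectors after `j` expansion steps applied to `(v, M)`. -/
noncomputable def arnoldiList {n : ℕ} (v : Fin n → ℝ) (M : Matrix (Fin n) (Fin n) ℝ) :
    ℕ → List (Fin n → ℝ)
  | 0 => [(norm2 v)⁻¹ • v]
  | j + 1 =>
    let qs := arnoldiList v M j
    let r := qs.foldl gsStep (Matrix.vecMul (qs.getLastD 0) M)
    qs ++ [(norm2 r)⁻¹ • r]

/-- The Arnoldi vector `q_{i+1}` of the paper (0-indexed: `aQ v M i`). -/
noncomputable def aQ {n : ℕ} (v : Fin n → ℝ) (M : Matrix (Fin n) (Fin n) ℝ) (i : ℕ) :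
    Fin n → ℝ :=
  (arnoldiList v M i).getLastD 0

/-- Partial residual `r^{(i)}` in outer step `j` (0-indexed): `q_j M` minus the projections
onto `q_0, …, q_{i-1}`. -/
noncomputable def pres {n : ℕ} (v : Fin n → ℝ) (M : Matrix (Fin n) (Fin n) ℝ) (j i : ℕ) :
    Fin n → ℝ :=
  ((arnoldiList v M j).take i).foldl gsStep (Matrix.vecMul (aQ v M j) M)

/-- The Gram–Schmidt coefficient `h_{j,i}` (0-indexed in both arguments). -/
noncomputable def aH {n : ℕ} (v : Fin n → ℝ) (M : Matrix (Fin n) (Fin n) ℝ) (j i : ℕ) : ℝ :=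
  pres v M j i ⬝ᵥ aQ v M i

/-- The subdiagonal coefficient `h_{j, j+1} = ‖r_{j+1}‖₂` (0-indexed in `j`). -/
noncomputable def hsub {n : ℕ} (v : Fin n → ℝ) (M : Matrix (Fin n) (Fin n) ℝ) (j : ℕ) : ℝ :=
  norm2 (pres v M j (j + 1))

/-- The upper-Hessenberg matrix `H_j` produced by `j` Arnoldi steps. -/
noncomputable def arnoldiHmat {n : ℕ} (v : Fin n → ℝ) (M : Matrix (Fin n) (Fin n) ℝ) (j : ℕ) :
    Matrix (Fin j) (Fin j) ℝ := fun i l =>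
  if (l : ℕ) ≤ (i : ℕ) then aH v M i l
  else if (l : ℕ) = (i : ℕ) + 1 then hsub v M i else 0

/-- The matrix `Q_j` whose rows are the Arnoldi vectors `q_1, …, q_j` of the paper. -/
noncomputable def arnoldiQmat {n : ℕ} (v : Fin n → ℝ) (M : Matrix (Fin n) (Fin n) ℝ) (j : ℕ) :
    Matrix (Fin j) (Fin n) ℝ := fun i => aQ v M i

/-- The Krylov subspace `K^j(v, M) = span{v, vM, …, vM^{j-1}}` (of row vectors). -/
noncomputable def krylov {n : ℕ} (v : Fin n → ℝ) (M : Matrix (Fin n) (Fin n) ℝ) (j : ℕ) :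
    Submodule ℝ (Fin n → ℝ) :=
  Submodule.span ℝ (Set.range fun i : Fin j => Matrix.vecMul v (M ^ (i : ℕ)))

section ArnoldiAux

variable {n : ℕ} (v : Fin n → ℝ) (M : Matrix (Fin n) (Fin n) ℝ)

lemma arnoldiList_length (j : ℕ) : (arnoldiList v M j).length = j + 1 := by
  induction j with
  | zero => rfl
  | succ j ih => simp [arnoldiList, ih]

lemma arnoldiList_succ (j : ℕ) :
    arnoldiList v M (j + 1) =
      arnoldiList v M j ++
        [(norm2 (pres v M j (j + 1)))⁻¹ • pres v M j (j + 1)] := by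
  have h1 : pres v M j (j + 1) =
      (arnoldiList v M j).foldl gsStep
        (Matrix.vecMul ((arnoldiList v M j).getLastD 0) M) := by
    rw [pres, List.take_of_length_le (le_of_eq (arnoldiList_length v M j))]
    rfl
  rw [h1]
  rfl

lemma aQ_succ (j : ℕ) :
    aQ v M (j + 1) = (norm2 (pres v M j (j + 1)))⁻¹ • pres v M j (j + 1) := by
  rw [aQ, arnoldiList_succ, List.getLastD_concat]

lemma arnoldiList_getElem (j i : ℕ) (h : i ≤ j) :
    (arnoldiList v M j)[i]? = some (aQ v M i) := by
  induction j with
  | zero =>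
    interval_cases i
    rfl
  | succ j ih =>
    rw [arnoldiList_succ]
    rcases Nat.lt_or_ge i (j + 1) with hi | hi
    · rw [List.getElem?_append_left (by rw [arnoldiList_length]; omega)]
      exact ih (by omega)
    · have hij : i = j + 1 := by omega
      subst hij
      rw [List.getElem?_append_right (by rw [arnoldiList_length]),
        arnoldiList_length]
      simp [aQ_succ]

lemma pres_zero (j : ℕ) : pres v M j 0 = Matrix.vecMul (aQ v M j) M := rfl

lemma pres_succ (j i : ℕ) (h : i ≤ j) :
    pres v M j (i + 1) = pres v M j i - aH v M j i • aQ v M i := by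
  rw [pres, List.take_succ, arnoldiList_getElem v M j i h, List.foldl_append]
  rfl

lemma norm2_smul_inv_smul (r : Fin n → ℝ) : norm2 r • (norm2 r)⁻¹ • r = r := by
  rcases eq_or_ne (norm2 r) 0 with h | h
  · have hdot : r ⬝ᵥ r = 0 := by
      have hnn : 0 ≤ r ⬝ᵥ r :=
        Finset.sum_nonneg fun i _ => mul_self_nonneg _
      have h2 := h
      rw [norm2, Real.sqrt_eq_zero hnn] at h2
      exact h2
    have hr : r = 0 := by
      funext i
      have := (Finset.sum_eq_zero_iff_of_nonneg
        (fun i _ => mul_self_nonneg (r i))).mp hdot i (Finset.mem_univ i)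
      exact mul_self_eq_zero.mp this
    simp [hr]
  · rw [smul_smul, mul_inv_cancel₀ h, one_smul]

lemma pres_top (i : ℕ) : pres v M i (i + 1) = hsub v M i • aQ v M (i + 1) := by
  rw [aQ_succ, hsub]
  exact (norm2_smul_inv_smul _).symm

lemma pres_telescope (i : ℕ) : ∀ m, m ≤ i + 1 →
    pres v M i m =
      Matrix.vecMul (aQ v M i) M - ∑ l ∈ Finset.range m, aH v M i l • aQ v M l := by
  intro m
  induction m with
  | zero => intro _; simp [pres_zero]
  | succ m ih =>
    intro hm
    rw [pres_succ v M i m (by omega), ih (by omega), Finset.sum_range_succ,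
      sub_sub]

lemma arnoldi_rel (i : ℕ) :
    Matrix.vecMul (aQ v M i) M =
      hsub v M i • aQ v M (i + 1) +
        ∑ l ∈ Finset.range (i + 1), aH v M i l • aQ v M l := by
  have h := pres_telescope v M i (i + 1) le_rfl
  rw [pres_top] at h
  rw [eq_sub_iff_add_eq] at h
  exact h.symm

end ArnoldiAux

/-- an Arnoldi aggregation of size `j` is `(j-1)`-exact:
`p̃_k = p_k` for `0 ≤ k ≤ j-1`. -/
theorem arnoldi_initially_exact {n j : ℕ} (hj : 0 < j)
    (P : Matrix (Fin n) (Fin n) ℝ)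
    (hPnn : ∀ i l, 0 ≤ P i l) (hProw : ∀ i, ∑ l, P i l = 1)
    (p₀ : Fin n → ℝ) (hp₀nn : ∀ s, 0 ≤ p₀ s) (hp₀sum : ∑ s, p₀ s = 1)
    (hrun : ∀ i, i + 1 < j → hsub p₀ P i ≠ 0) :
    ∀ k : ℕ, k ≤ j - 1 →
      Matrix.vecMul
        (Matrix.vecMul (fun s : Fin j => if (s : ℕ) = 0 then norm2 p₀ else 0)
          ((arnoldiHmat p₀ P j) ^ k))
        (arnoldiQmat p₀ P j) =
      Matrix.vecMul p₀ (P ^ k) := by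
  classical
  set πv : Fin j → ℝ := fun s : Fin j => if (s : ℕ) = 0 then norm2 p₀ else 0 with hπv
  set H : Matrix (Fin j) (Fin j) ℝ := arnoldiHmat p₀ P j with hH
  -- norm2 p₀ ≠ 0
  obtain ⟨s₀, hs₀⟩ : ∃ s, p₀ s ≠ 0 := by
    by_contra h
    push_neg at h
    simp [h] at hp₀sum
  have hdotpos : 0 < p₀ ⬝ᵥ p₀ := by
    refine Finset.sum_pos' (fun i _ => mul_self_nonneg _)
      ⟨s₀, Finset.mem_univ s₀, ?_⟩
    have : 0 < p₀ s₀ := lt_of_le_of_ne (hp₀nn s₀) (Ne.symm hs₀)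
    exact mul_pos this this
  have hn0 : norm2 p₀ ≠ 0 := by
    rw [norm2]
    positivity
  have haQ0 : aQ p₀ P 0 = (norm2 p₀)⁻¹ • p₀ := rfl
  -- vecMul against Q as a sum
  have hQ : ∀ w : Fin j → ℝ,
      Matrix.vecMul w (arnoldiQmat p₀ P j) = ∑ i : Fin j, w i • aQ p₀ P (i : ℕ) := by
    intro w
    funext t
    rw [Finset.sum_apply]
    simp [Matrix.vecMul, dotProduct, arnoldiQmat]
  -- the inner "row relation" of H against the aQ's
  have hrow : ∀ i : Fin j, (i : ℕ) + 1 < j →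
      ∑ l : Fin j, H i l • aQ p₀ P (l : ℕ) = Matrix.vecMul (aQ p₀ P (i : ℕ)) P := by
    intro i hi
    have hstep : ∑ l : Fin j, H i l • aQ p₀ P (l : ℕ) =
        ∑ m ∈ Finset.range j,
          (if m ≤ (i : ℕ) then aH p₀ P i m
            else if m = (i : ℕ) + 1 then hsub p₀ P i else 0) • aQ p₀ P m := by
      rw [← Fin.sum_univ_eq_sum_range
        (fun m => (if m ≤ (i : ℕ) then aH p₀ P i m
            else if m = (i : ℕ) + 1 then hsub p₀ P i else 0) • aQ p₀ P m) j]
      rfl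
    rw [hstep]
    have hsub1 : ∑ m ∈ Finset.range j,
        (if m ≤ (i : ℕ) then aH p₀ P i m
          else if m = (i : ℕ) + 1 then hsub p₀ P i else 0) • aQ p₀ P m =
        ∑ m ∈ Finset.range ((i : ℕ) + 2),
          (if m ≤ (i : ℕ) then aH p₀ P i m
            else if m = (i : ℕ) + 1 then hsub p₀ P i else 0) • aQ p₀ P m := by
      refine (Finset.sum_subset (Finset.range_subset_range.mpr (by omega)) ?_).symm
      intro m _ hm
      rw [Finset.mem_range, not_lt] at hm
      rw [if_neg (by omega), if_neg (by omega), zero_smul]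
    rw [hsub1, Finset.sum_range_succ, if_neg (by omega), if_pos rfl]
    have hcongr : ∑ m ∈ Finset.range ((i : ℕ) + 1),
        (if m ≤ (i : ℕ) then aH p₀ P i m
          else if m = (i : ℕ) + 1 then hsub p₀ P i else 0) • aQ p₀ P m =
        ∑ m ∈ Finset.range ((i : ℕ) + 1), aH p₀ P i m • aQ p₀ P m := by
      refine Finset.sum_congr rfl fun m hm => ?_
      rw [Finset.mem_range] at hm
      rw [if_pos (by omega)]
    rw [hcongr, arnoldi_rel p₀ P (i : ℕ), add_comm]
  -- main induction
  have main : ∀ k : ℕ, k < j →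
      (∀ l : Fin j, k < (l : ℕ) → Matrix.vecMul πv (H ^ k) l = 0) ∧
      ∑ i : Fin j, Matrix.vecMul πv (H ^ k) i • aQ p₀ P (i : ℕ) =
        Matrix.vecMul p₀ (P ^ k) := by
    intro k
    induction k with
    | zero =>
      intro _
      rw [pow_zero, Matrix.vecMul_one, pow_zero, Matrix.vecMul_one]
      constructor
      · intro l hl
        exact if_neg (by omega)
      · rw [Finset.sum_eq_single_of_mem ⟨0, hj⟩ (Finset.mem_univ _)
          (fun l _ hl => by
            have : (l : ℕ) ≠ 0 := fun h => hl (Fin.ext h)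
            simp only [hπv]
            rw [if_neg this, zero_smul])]
        simp only [hπv]
        rw [if_pos trivial, haQ0, smul_smul, mul_inv_cancel₀ hn0, one_smul]
    | succ k ih =>
      intro hk
      obtain ⟨hsupp, hsum⟩ := ih (by omega)
      have hw : Matrix.vecMul πv (H ^ (k + 1)) =
          Matrix.vecMul (Matrix.vecMul πv (H ^ k)) H := by
        rw [pow_succ, ← Matrix.vecMul_vecMul]
      constructor
      · intro l hl
        rw [hw]
        have : Matrix.vecMul (Matrix.vecMul πv (H ^ k)) H l =
            ∑ i : Fin j, Matrix.vecMul πv (H ^ k) i * H i l := rfl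
        rw [this]
        refine Finset.sum_eq_zero fun i _ => ?_
        rcases le_or_gt (i : ℕ) k with hik | hik
        · have hHz : H i l = 0 := by
            simp only [hH, arnoldiHmat]
            rw [if_neg (by omega), if_neg (by omega)]
          rw [hHz, mul_zero]
        · rw [hsupp i hik, zero_mul]
      · rw [hw]
        have hexp : ∀ l : Fin j, Matrix.vecMul (Matrix.vecMul πv (H ^ k)) H l =
            ∑ i : Fin j, Matrix.vecMul πv (H ^ k) i * H i l := fun l => rfl
        calc ∑ l : Fin j,
              Matrix.vecMul (Matrix.vecMul πv (H ^ k)) H l • aQ p₀ P (l : ℕ)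
            = ∑ l : Fin j, ∑ i : Fin j,
                (Matrix.vecMul πv (H ^ k) i * H i l) • aQ p₀ P (l : ℕ) := by
              refine Finset.sum_congr rfl fun l _ => ?_
              rw [hexp l, Finset.sum_smul]
          _ = ∑ i : Fin j, Matrix.vecMul πv (H ^ k) i •
                ∑ l : Fin j, H i l • aQ p₀ P (l : ℕ) := by
              rw [Finset.sum_comm]
              refine Finset.sum_congr rfl fun i _ => ?_
              rw [Finset.smul_sum]
              refine Finset.sum_congr rfl fun l _ => ?_
              rw [smul_smul]
          _ = ∑ i : Fin j, Matrix.vecMul πv (H ^ k) i •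
                Matrix.vecMul (aQ p₀ P (i : ℕ)) P := by
              refine Finset.sum_congr rfl fun i _ => ?_
              rcases eq_or_ne (Matrix.vecMul πv (H ^ k) i) 0 with hz | hz
              · rw [hz, zero_smul, zero_smul]
              · have hik : (i : ℕ) ≤ k := by
                  by_contra hc
                  exact hz (hsupp i (by omega))
                rw [hrow i (by omega)]
          _ = Matrix.vecMul (∑ i : Fin j,
                Matrix.vecMul πv (H ^ k) i • aQ p₀ P (i : ℕ)) P := by
              rw [← Matrix.vecMulLinear_apply P, map_sum]
              refine Finset.sum_congr rfl fun i _ => ?_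
              rw [_root_.map_smul, Matrix.vecMulLinear_apply]
          _ = Matrix.vecMul p₀ (P ^ (k + 1)) := by
              rw [hsum, pow_succ, ← Matrix.vecMul_vecMul]
  intro k hk
  have hkj : k < j := by omega
  rw [hQ]
  exact (main k hkj).2
end

section
/- Any exact aggregation of (P, p_0) has dimension at least dim span{p_0^T, p_0^T P, p_0^T P^2, ...}. Hence, if K^j(p_0,P) is invariant under P (so this span has dimension j), the Arnoldi aggregation of size j is a smallest exact aggregation. -/
open Matrix

/-- any exact aggregation of `(P, p₀)` has dimension at least
`dim span{p₀, p₀P, p₀P², …}`. -/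
theorem exact_min_size {n m : ℕ}
    (P : Matrix (Fin n) (Fin n) ℝ) (p₀ : Fin n → ℝ)
    (Pm : Matrix (Fin m) (Fin m) ℝ) (A : Matrix (Fin m) (Fin n) ℝ) (π₀ : Fin m → ℝ)
    (hdyn : Pm * A = A * P) (hinit : Matrix.vecMul π₀ A = p₀) :
    Module.finrank ℝ
        (Submodule.span ℝ (Set.range fun k : ℕ => Matrix.vecMul p₀ (P ^ k))) ≤ m := by
  have key : ∀ k : ℕ, Matrix.vecMul p₀ (P ^ k)
      = Matrix.vecMul (Matrix.vecMul π₀ (Pm ^ k)) A := by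
    intro k
    induction k with
    | zero => simp [hinit]
    | succ k ih =>
      rw [pow_succ, ← Matrix.vecMul_vecMul, ih, Matrix.vecMul_vecMul, ← hdyn, pow_succ]
      simp [Matrix.vecMul_vecMul, Matrix.mul_assoc]
  have hsub : Submodule.span ℝ (Set.range fun k : ℕ => Matrix.vecMul p₀ (P ^ k))
      ≤ LinearMap.range (Matrix.vecMulLinear A) := by
    rw [Submodule.span_le]
    rintro _ ⟨k, rfl⟩
    exact ⟨Matrix.vecMul π₀ (Pm ^ k), (key k).symm⟩
  calc Module.finrank ℝ
        (Submodule.span ℝ (Set.range fun k : ℕ => Matrix.vecMul p₀ (P ^ k)))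
      ≤ Module.finrank ℝ (LinearMap.range (Matrix.vecMulLinear A)) :=
        Submodule.finrank_mono hsub
    _ ≤ Module.finrank ℝ (Fin m → ℝ) := (Matrix.vecMulLinear A).finrank_range_le
    _ = m := by simp
end

section
/- For any aggregation (Π, A, π_0) with p̃_0 = p_0, the transient error satisfies ‖p̃_k − p_k‖₁ ≤ Σ_{i=0}^{k−1} ⟨|π_i|, |Π A − A P|·𝟙_n⟩ for all k ≥ 1, where π_i^T = π_0^T Π^i, |·| denotes the entrywise absolute value, 𝟙_n is the all-ones vector, and P is row-stochastic. -/
open Matrix Finset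

lemma l1_contract {n : ℕ} (P : Matrix (Fin n) (Fin n) ℝ)
    (hPnn : ∀ i l, 0 ≤ P i l) (hProw : ∀ i, ∑ l, P i l = 1)
    (v : Fin n → ℝ) : ∑ j, |Matrix.vecMul v P j| ≤ ∑ i, |v i| := by
  calc ∑ j, |Matrix.vecMul v P j|
      ≤ ∑ j, ∑ i, |v i| * P i j := by
        refine Finset.sum_le_sum fun j _ => ?_
        calc |Matrix.vecMul v P j| ≤ ∑ i, |v i * P i j| := by
              simp only [Matrix.vecMul, dotProduct]
              exact Finset.abs_sum_le_sum_abs _ _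
          _ = ∑ i, |v i| * P i j := by
              refine Finset.sum_congr rfl fun i _ => ?_
              rw [abs_mul, abs_of_nonneg (hPnn i j)]
    _ = ∑ i, |v i| := by
        rw [Finset.sum_comm]
        simp [← Finset.mul_sum, hProw]

/-- for any aggregation with `p̃_0 = p_0` and row-stochastic `P`,
`‖p̃_k − p_k‖₁ ≤ Σ_{i=0}^{k-1} ⟨|π_i|, |ΠA − AP|·𝟙⟩` for all `k ≥ 1`. -/
theorem aggregation_error_bound {m n : ℕ}
    (Pm : Matrix (Fin m) (Fin m) ℝ) (A : Matrix (Fin m) (Fin n) ℝ)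
    (π₀ : Fin m → ℝ) (P : Matrix (Fin n) (Fin n) ℝ) (p₀ : Fin n → ℝ)
    (hPnn : ∀ i l, 0 ≤ P i l) (hProw : ∀ i, ∑ l, P i l = 1)
    (hinit : Matrix.vecMul π₀ A = p₀) :
    ∀ k : ℕ, 1 ≤ k →
      ∑ s, |(Matrix.vecMul (Matrix.vecMul π₀ (Pm ^ k)) A - Matrix.vecMul p₀ (P ^ k)) s| ≤
        ∑ i ∈ Finset.range k, ∑ s : Fin m,
          |Matrix.vecMul π₀ (Pm ^ i) s| * ∑ t, |(Pm * A - A * P) s t| := by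
  suffices h : ∀ k : ℕ,
      ∑ s, |(Matrix.vecMul (Matrix.vecMul π₀ (Pm ^ k)) A - Matrix.vecMul p₀ (P ^ k)) s| ≤
        ∑ i ∈ Finset.range k, ∑ s : Fin m,
          |Matrix.vecMul π₀ (Pm ^ i) s| * ∑ t, |(Pm * A - A * P) s t| by
    exact fun k _ => h k
  intro k
  induction k with
  | zero => simp [hinit]
  | succ k ih =>
    set πk := Matrix.vecMul π₀ (Pm ^ k) with hπk
    set E := Pm * A - A * P with hE
    have key : Matrix.vecMul (Matrix.vecMul π₀ (Pm ^ (k+1))) A - Matrix.vecMul p₀ (P ^ (k+1))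
        = Matrix.vecMul πk E +
          Matrix.vecMul (Matrix.vecMul πk A - Matrix.vecMul p₀ (P ^ k)) P := by
      have h1 : Matrix.vecMul (Matrix.vecMul π₀ (Pm ^ (k+1))) A
          = Matrix.vecMul πk (Pm * A) := by
        rw [pow_succ, hπk, ← Matrix.vecMul_vecMul, ← Matrix.vecMul_vecMul]
      have h2 : Matrix.vecMul p₀ (P ^ (k+1))
          = Matrix.vecMul (Matrix.vecMul p₀ (P ^ k)) P := by
        rw [pow_succ, ← Matrix.vecMul_vecMul]
      rw [h1, h2]
      have h3 : Pm * A = E + A * P := by rw [hE, sub_add_cancel]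
      rw [h3, Matrix.vecMul_add, Matrix.sub_vecMul, ← Matrix.vecMul_vecMul]
      abel
    rw [key]
    calc ∑ s, |(Matrix.vecMul πk E +
            Matrix.vecMul (Matrix.vecMul πk A - Matrix.vecMul p₀ (P ^ k)) P) s|
        ≤ ∑ s, (|Matrix.vecMul πk E s| +
            |Matrix.vecMul (Matrix.vecMul πk A - Matrix.vecMul p₀ (P ^ k)) P s|) := by
          exact Finset.sum_le_sum fun s _ => abs_add_le _ _
      _ = (∑ s, |Matrix.vecMul πk E s|) +
            ∑ s, |Matrix.vecMul (Matrix.vecMul πk A - Matrix.vecMul p₀ (P ^ k)) P s| := by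
          rw [Finset.sum_add_distrib]
      _ ≤ (∑ s : Fin m, |πk s| * ∑ t, |E s t|) +
            ∑ s, |(Matrix.vecMul πk A - Matrix.vecMul p₀ (P ^ k)) s| := by
          refine add_le_add ?_ (l1_contract P hPnn hProw _)
          calc ∑ t, |Matrix.vecMul πk E t|
              ≤ ∑ t, ∑ s, |πk s| * |E s t| := by
                  refine Finset.sum_le_sum fun t _ => ?_
                  calc |Matrix.vecMul πk E t| ≤ ∑ s, |πk s * E s t| := by
                        simp only [Matrix.vecMul, dotProduct]
                        exact Finset.abs_sum_le_sum_abs _ _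
                    _ = ∑ s, |πk s| * |E s t| := by simp [abs_mul]
              _ = ∑ s : Fin m, |πk s| * ∑ t, |E s t| := by
                  rw [Finset.sum_comm]; simp [Finset.mul_sum]
      _ ≤ (∑ s : Fin m, |πk s| * ∑ t, |E s t|) +
            ∑ i ∈ Finset.range k, ∑ s : Fin m,
              |Matrix.vecMul π₀ (Pm ^ i) s| * ∑ t, |(Pm * A - A * P) s t| := by
          exact add_le_add_right (by simpa [hπk, hE] using ih) _
      _ = ∑ i ∈ Finset.range (k+1), ∑ s : Fin m,
            |Matrix.vecMul π₀ (Pm ^ i) s| * ∑ t, |(Pm * A - A * P) s t| := by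
          rw [Finset.sum_range_succ, hπk, hE]; ring
end
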